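/- Fix a nonzero α ∈ 𝔻 and n ≥ 1, and let θ(z) = ((z−α)/(1−conj(α)z))ⁿ. The model space Q_θ = span{z^t/(1−conj(α)z)^{t+1} : 0 ≤ t ≤ n−1} is invariant under C_φ for a holomorphic self-map φ of 𝔻 if and only if there exists a nonzero scalar c with φ(z) = (1−c)/conj(α) + cz. -/

import Mathlib

open Complex Metric Filter Set

noncomputable section

/-- A holomorphic self-map of the open unit disc. -/
def SelfMapD (φ : ℂ → ℂ) : Prop :=
  DifferentiableOn ℂ φ (Metric.ball (0:ℂ) 1) ∧
  Set.MapsTo φ (Metric.ball (0:ℂ) 1) (Metric.ball (0:ℂ) 1)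

/-- Membership in the Hardy space `H²(𝔻)`. -/
def MemHardy2 (f : ℂ → ℂ) : Prop :=
  DifferentiableOn ℂ f (Metric.ball (0:ℂ) 1) ∧
  ∃ M : ℝ, ∀ r : ℝ, 0 ≤ r → r < 1 →
    (∫ t in (0:ℝ)..(2 * Real.pi),
      ‖f ((r : ℂ) * Complex.exp (t * Complex.I))‖ ^ 2) ≤ M

/-- An inner function: a bounded-by-one holomorphic function on `𝔻` whose radial
boundary values have modulus one almost everywhere. -/
def InnerFunction (θ : ℂ → ℂ) : Prop :=
  DifferentiableOn ℂ θ (Metric.ball (0:ℂ) 1) ∧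
  (∀ z ∈ Metric.ball (0:ℂ) 1, ‖θ z‖ ≤ 1) ∧
  ∀ᵐ t : ℝ, Filter.Tendsto
    (fun r : ℝ => ‖θ ((r : ℂ) * Complex.exp (t * Complex.I))‖)
    (nhdsWithin 1 (Set.Iio 1)) (nhds 1)

/-- The `n`-th Taylor coefficient of `f` at the origin. -/
def hcoef (f : ℂ → ℂ) (n : ℕ) : ℂ := iteratedDeriv n f 0 / n.factorial

/-- The `H²` inner product, via Taylor coefficients. -/
def hInner (f g : ℂ → ℂ) : ℂ := ∑' n : ℕ, hcoef f n * (starRingEnd ℂ) (hcoef g n)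

/-- The square of the `H²` norm. -/
def hNorm2 (f : ℂ → ℂ) : ℝ := ∑' n : ℕ, ‖hcoef f n‖ ^ 2

/-- Membership in the model space `Q_θ = H² ⊖ θH²`. -/
def MemModel (θ f : ℂ → ℂ) : Prop :=
  MemHardy2 f ∧ ∀ g, MemHardy2 g → hInner f (fun z => θ z * g z) = 0

/-- The model space `Q_θ` is invariant under the composition operator `C_φ`. -/
def ModelInv (θ φ : ℂ → ℂ) : Prop :=
  ∀ f, MemModel θ f → MemModel θ (fun z => f (φ z))

/-- The Beurling subspace `θH²` is invariant under the composition operator `C_φ`. -/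
def BeurlingInv (θ φ : ℂ → ℂ) : Prop :=
  ∀ f, MemHardy2 f → ∃ g, MemHardy2 g ∧
    ∀ z ∈ Metric.ball (0:ℂ) 1, θ (φ z) * f (φ z) = θ z * g z

/-- A subspace of functions is invariant under `C_φ` (as functions on the disc). -/
def SpanInvOn (Q : Submodule ℂ (ℂ → ℂ)) (φ : ℂ → ℂ) : Prop :=
  ∀ f ∈ Q, ∃ g ∈ Q, ∀ z ∈ Metric.ball (0:ℂ) 1, f (φ z) = g z

/-- The (holomorphic extension of the) quotient `(θ∘σ)/θ` lies in `H²`. -/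
def QuotInH2 (θ σ : ℂ → ℂ) : Prop :=
  ∃ g, MemHardy2 g ∧ ∀ z ∈ Metric.ball (0:ℂ) 1, θ z ≠ 0 → g z = θ (σ z) / θ z

/-- The model space spanned by `z^t/(1-ᾱz)^{t+1}`, `0 ≤ t ≤ n-1`. -/
def Qball (α : ℂ) (n : ℕ) : Submodule ℂ (ℂ → ℂ) :=
  Submodule.span ℂ
    {f : ℂ → ℂ | ∃ t : ℕ, t < n ∧ f = fun z => z ^ t / (1 - (starRingEnd ℂ) α * z) ^ (t + 1)}

section
open Polynomial

namespace BlaschkeAux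

lemma ball_infinite : (Metric.ball (0:ℂ) 1).Infinite := by
  refine Set.infinite_of_injective_forall_mem
    (f := fun k : ℕ => ((k:ℂ)+2)⁻¹) ?_ ?_
  · intro i j hij
    have h2 : (i:ℂ) + 2 = (j:ℂ) + 2 := inv_injective hij
    have : (i:ℂ) = (j:ℂ) := by linear_combination h2
    exact_mod_cast this
  · intro k
    have hre : ((k:ℂ)+2).re = (k:ℝ)+2 := by simp
    have hle : (k:ℝ)+2 ≤ ‖((k:ℂ)+2)‖ := by
      calc (k:ℝ)+2 ≤ |((k:ℂ)+2).re| := by rw [hre]; exact le_abs_self _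
        _ ≤ ‖((k:ℂ)+2)‖ := Complex.abs_re_le_norm _
    rw [mem_ball_zero_iff, norm_inv, inv_lt_one_iff₀]
    right
    have : (0:ℝ) ≤ (k:ℝ) := Nat.cast_nonneg k
    linarith

lemma poly_eq_of_ball {p q : ℂ[X]} (h : ∀ z ∈ Metric.ball (0:ℂ) 1, p.eval z = q.eval z) :
    p = q :=
  p.eq_of_infinite_eval_eq q (ball_infinite.mono (fun z hz => h z hz))

lemma rootMult_pow {p : ℂ[X]} (hp : p ≠ 0) (k : ℕ) (x : ℂ) :
    rootMultiplicity x (p ^ k) = k * rootMultiplicity x p := by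
  induction k with
  | zero => rw [pow_zero, ← C_1, rootMultiplicity_C, Nat.zero_mul]
  | succ k ih =>
      rw [pow_succ, rootMultiplicity_mul (mul_ne_zero (pow_ne_zero _ hp) hp), ih]
      ring

/-- Lemma B: representation of elements of `Qball`. -/
lemma exists_poly_of_mem_Qball {α : ℂ} {n : ℕ} (hn : 1 ≤ n) {g : ℂ → ℂ}
    (hg : g ∈ Qball α n) :
    ∃ q : ℂ[X], q.natDegree < n ∧
      ∀ z : ℂ, g z = q.eval z / (1 - (starRingEnd ℂ) α * z) ^ n := by
  set a := (starRingEnd ℂ) α with ha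
  induction hg using Submodule.span_induction with
  | mem f hf =>
      obtain ⟨t, htn, rfl⟩ := hf
      refine ⟨X ^ t * (1 - C a * X) ^ (n - 1 - t), ?_, ?_⟩
      · calc (X ^ t * (1 - C a * X) ^ (n - 1 - t) : ℂ[X]).natDegree
            ≤ (X ^ t : ℂ[X]).natDegree + ((1 - C a * X : ℂ[X]) ^ (n-1-t)).natDegree :=
              natDegree_mul_le
          _ ≤ t + (n-1-t) * (1 - C a * X : ℂ[X]).natDegree := by
              rw [natDegree_X_pow]
              exact Nat.add_le_add_left natDegree_pow_le _
          _ ≤ t + (n-1-t) * 1 := by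
              refine Nat.add_le_add_left (Nat.mul_le_mul_left _ ?_) _
              refine le_trans (natDegree_sub_le _ _) ?_
              simp only [natDegree_one, max_le_iff]
              refine ⟨Nat.zero_le _, le_trans natDegree_mul_le ?_⟩
              simp [natDegree_X]
          _ < n := by omega
      · intro z
        simp only [eval_mul, eval_pow, eval_sub, eval_one, eval_C, eval_X]
        by_cases hw : 1 - a * z = 0
        · rw [hw, zero_pow (by omega : t + 1 ≠ 0), zero_pow (by omega : n ≠ 0),
            div_zero, div_zero]
        · have hsplit : (1 - a*z) ^ n = (1 - a*z) ^ (t+1) * (1 - a*z) ^ (n-1-t) := by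
            rw [← pow_add]; congr 1; omega
          rw [hsplit, mul_div_mul_right _ _ (pow_ne_zero _ hw)]
  | zero => exact ⟨0, by rw [natDegree_zero]; omega, fun z => by simp⟩
  | add f₁ f₂ _ _ ih₁ ih₂ =>
      obtain ⟨q₁, hd₁, he₁⟩ := ih₁
      obtain ⟨q₂, hd₂, he₂⟩ := ih₂
      refine ⟨q₁ + q₂, lt_of_le_of_lt (natDegree_add_le _ _) (max_lt hd₁ hd₂), fun z => ?_⟩
      simp [Pi.add_apply, he₁ z, he₂ z, add_div]
  | smul c f _ ih =>
      obtain ⟨q, hd, he⟩ := ih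
      refine ⟨C c * q, lt_of_le_of_lt (natDegree_C_mul_le _ _) hd, fun z => ?_⟩
      simp [Pi.smul_apply, he z, mul_div_assoc, smul_eq_mul]

/-- Lemma A1: `z^t/(1-ᾱz)^n` is in the model space for `t < n`. -/
lemma pow_div_mem_Qball {α : ℂ} {n : ℕ} :
    ∀ m t : ℕ, t < n → n - 1 - t ≤ m →
    (fun z : ℂ => z ^ t / (1 - (starRingEnd ℂ) α * z) ^ n) ∈ Qball α n := by
  set a := (starRingEnd ℂ) α with ha
  intro m
  induction m with
  | zero =>
      intro t htn hle
      have hnt : n = t + 1 := by omega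
      subst hnt
      exact Submodule.subset_span ⟨t, by omega, rfl⟩
  | succ m ih =>
      intro t htn hle
      by_cases hcase : n - 1 - t ≤ m
      · exact ih t htn hcase
      have hk : n - 1 - t = m + 1 := by omega
      set k := m + 1 with hkdef
      have hfun : (fun z : ℂ => z ^ t / (1 - a * z) ^ n)
          = (fun z : ℂ => z ^ t / (1 - a * z) ^ (t+1))
            - ∑ j ∈ Finset.range k, ((-a) ^ (j+1) * (k.choose (j+1) : ℂ)) •
                (fun z : ℂ => z ^ (t+(j+1)) / (1 - a * z) ^ n) := by
        funext z
        simp only [Pi.sub_apply, Finset.sum_apply, Pi.smul_apply, smul_eq_mul]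
        by_cases hw : 1 - a * z = 0
        · rw [hw, zero_pow (by omega : n ≠ 0), zero_pow (by omega : t + 1 ≠ 0)]
          simp
        · have hwn : (1 - a*z) ^ n ≠ 0 := pow_ne_zero _ hw
          have hgen : z ^ t / (1 - a*z) ^ (t+1) = z ^ t * (1 - a*z) ^ k / (1 - a*z) ^ n := by
            have hsplit : (1 - a*z) ^ n = (1 - a*z) ^ (t+1) * (1 - a*z) ^ k := by
              rw [← pow_add]; congr 1; omega
            rw [hsplit, mul_div_mul_right _ _ (pow_ne_zero _ hw)]
          rw [hgen]
          have hbin : z ^ t * (1 - a*z) ^ k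
              = z ^ t + ∑ j ∈ Finset.range k,
                  ((-a) ^ (j+1) * (k.choose (j+1) : ℂ)) * z ^ (t+(j+1)) := by
            have h1 : (1 - a*z : ℂ) = (-(a*z)) + 1 := by ring
            rw [h1, add_pow, Finset.mul_sum, Finset.sum_range_succ']
            simp only [pow_zero, one_mul, Nat.choose_zero_right, Nat.cast_one, mul_one,
              one_pow]
            rw [add_comm]
            congr 1
            refine Finset.sum_congr rfl fun j hj => ?_
            rw [show (-(a*z) : ℂ) = (-a) * z by ring, mul_pow, pow_add]
            ring
          have hsum : ∑ j ∈ Finset.range k,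
              ((-a) ^ (j+1) * (k.choose (j+1) : ℂ)) * z ^ (t+(j+1)) / (1 - a*z) ^ n
              = ∑ j ∈ Finset.range k,
              ((-a) ^ (j+1) * (k.choose (j+1) : ℂ)) * (z ^ (t+(j+1)) / (1 - a*z) ^ n) :=
            Finset.sum_congr rfl fun j _ => mul_div_assoc _ _ _
          rw [hbin, add_div, Finset.sum_div, hsum]
          ring
      rw [hfun]
      refine Submodule.sub_mem _ (Submodule.subset_span ⟨t, htn, rfl⟩) ?_
      refine Submodule.sum_mem _ fun j hj => Submodule.smul_mem _ _ ?_
      have hjk : j + 1 ≤ k := Finset.mem_range.1 hj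
      exact ih (t + (j+1)) (by omega) (by omega)

/-- Lemma A: `q(z)/(1-ᾱz)^n ∈ Q_ball` for `deg q < n`. -/
lemma poly_div_mem_Qball {α : ℂ} {n : ℕ} {q : ℂ[X]} (hq : q.natDegree < n) :
    (fun z : ℂ => q.eval z / (1 - (starRingEnd ℂ) α * z) ^ n) ∈ Qball α n := by
  set a := (starRingEnd ℂ) α with ha
  have hfun : (fun z : ℂ => q.eval z / (1 - a * z) ^ n)
      = ∑ i ∈ Finset.range n, q.coeff i •
          (fun z : ℂ => z ^ i / (1 - a * z) ^ n) := by
    funext z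
    simp only [Finset.sum_apply, Pi.smul_apply, smul_eq_mul]
    rw [eval_eq_sum_range' hq, Finset.sum_div]
    exact Finset.sum_congr rfl fun i _ => (mul_div_assoc _ _ _)
  rw [hfun]
  exact Submodule.sum_mem _ fun i hi =>
    Submodule.smul_mem _ _
      (pow_div_mem_Qball (n - 1 - i) i (Finset.mem_range.1 hi) le_rfl)

lemma one_sub_ne_zero {u v : ℂ} (hu : ‖u‖ < 1) (hv : ‖v‖ < 1) :
    1 - u * v ≠ 0 := by
  intro h
  have huv : u * v = 1 := by linear_combination -h
  have := congrArg (‖·‖) huv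
  rw [norm_mul, norm_one] at this
  nlinarith [norm_nonneg u, norm_nonneg v]

end BlaschkeAux

end

open Polynomial BlaschkeAux in
/-- for `θ = b_α^n` with `α ≠ 0`, the model space is `C_φ`-invariant iff
`φ(z) = (1-c)/conj(α) + cz` for some `c ≠ 0`. -/
theorem blaschke_power_model_space_invariant_iff
    (α : ℂ) (hα : α ∈ Metric.ball (0:ℂ) 1) (hα0 : α ≠ 0)
    (n : ℕ) (hn : 1 ≤ n) (φ : ℂ → ℂ) (hφ : SelfMapD φ) :
    SpanInvOn (Qball α n) φ ↔
      ∃ c : ℂ, c ≠ 0 ∧ ∀ z ∈ Metric.ball (0:ℂ) 1,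
        φ z = (1 - c) / (starRingEnd ℂ) α + c * z := by
  obtain ⟨k, rfl⟩ : ∃ k, n = k + 1 := ⟨n - 1, by omega⟩
  set a := (starRingEnd ℂ) α with hadef
  have ha : a ≠ 0 := by
    rw [hadef, starRingEnd_apply]
    exact star_ne_zero.mpr hα0
  have habs : ‖a‖ < 1 := by
    rw [hadef, Complex.norm_conj]
    simpa using mem_ball_zero_iff.mp hα
  have hzabs : ∀ z ∈ Metric.ball (0:ℂ) 1, ‖z‖ < 1 := fun z hz => by
    simpa using mem_ball_zero_iff.mp hz
  have hw : ∀ z ∈ Metric.ball (0:ℂ) 1, 1 - a * z ≠ 0 := fun z hz =>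
    one_sub_ne_zero habs (hzabs z hz)
  have hwφ : ∀ z ∈ Metric.ball (0:ℂ) 1, 1 - a * φ z ≠ 0 := fun z hz =>
    one_sub_ne_zero habs (hzabs _ (hφ.2 hz))
  have hainv : a * a⁻¹ = 1 := mul_inv_cancel₀ ha
  constructor
  · intro hInv
    obtain ⟨g₀, hg₀Q, hg₀⟩ := hInv (fun z => z ^ (0:ℕ) / (1 - a*z) ^ (0+1))
      (Submodule.subset_span ⟨0, by omega, by rw [hadef]⟩)
    obtain ⟨q₀, hq₀d, hq₀e⟩ := exists_poly_of_mem_Qball hn hg₀Q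
    obtain ⟨g₁, hg₁Q, hg₁⟩ := hInv (fun z => z ^ k / (1 - a*z) ^ (k+1))
      (Submodule.subset_span ⟨k, by omega, by rw [hadef]⟩)
    obtain ⟨q₁, hq₁d, hq₁e⟩ := exists_poly_of_mem_Qball hn hg₁Q
    have h1 : ∀ z ∈ Metric.ball (0:ℂ) 1,
        q₀.eval z * (1 - a * φ z) = (1 - a*z) ^ (k+1) := by
      intro z hz
      have hh := hg₀ z hz
      rw [hq₀e z] at hh
      simp only [pow_zero, zero_add, pow_one] at hh
      rw [div_eq_div_iff (hwφ z hz) (pow_ne_zero _ (hw z hz))] at hh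
      linear_combination -hh
    have h2 : ∀ z ∈ Metric.ball (0:ℂ) 1,
        (φ z) ^ k * (1 - a*z) ^ (k+1) = q₁.eval z * (1 - a * φ z) ^ (k+1) := by
      intro z hz
      have hh := hg₁ z hz
      rw [hq₁e z] at hh
      rw [div_eq_div_iff (pow_ne_zero _ (hwφ z hz)) (pow_ne_zero _ (hw z hz))] at hh
      linear_combination hh
    have key : ∀ z ∈ Metric.ball (0:ℂ) 1,
        (q₀.eval z - (1 - a*z) ^ (k+1)) ^ k * q₀.eval z
          = a ^ k * q₁.eval z * (1 - a*z) ^ ((k+1)*k) := by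
      intro z hz
      have hwne : (1 - a*z) ≠ 0 := hw z hz
      have e1 : q₀.eval z * (1 - a * φ z) = (1 - a*z) ^ (k+1) := h1 z hz
      have e2 : (φ z) ^ k * (1 - a*z) ^ (k+1) = q₁.eval z * (1 - a * φ z) ^ (k+1) :=
        h2 z hz
      have hd : q₀.eval z - (1 - a*z) ^ (k+1) = q₀.eval z * (a * φ z) := by
        linear_combination e1
      have hbu : (φ z) ^ k * (q₀.eval z) ^ (k+1) = q₁.eval z * (1 - a*z) ^ ((k+1)*k) := by
        apply mul_left_cancel₀ (pow_ne_zero (k+1) hwne)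
        calc (1 - a*z) ^ (k+1) * ((φ z) ^ k * (q₀.eval z) ^ (k+1))
            = ((φ z) ^ k * (1 - a*z) ^ (k+1)) * (q₀.eval z) ^ (k+1) := by ring
          _ = q₁.eval z * (1 - a * φ z) ^ (k+1) * (q₀.eval z) ^ (k+1) := by rw [e2]
          _ = q₁.eval z * ((q₀.eval z) ^ (k+1) * (1 - a * φ z) ^ (k+1)) := by ring
          _ = q₁.eval z * (q₀.eval z * (1 - a * φ z)) ^ (k+1) := by rw [mul_pow]
          _ = q₁.eval z * ((1 - a*z) ^ (k+1)) ^ (k+1) := by rw [e1]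
          _ = q₁.eval z * (1 - a*z) ^ ((k+1)*(k+1)) := by rw [← pow_mul]
          _ = (1 - a*z) ^ (k+1) * (q₁.eval z * (1 - a*z) ^ ((k+1)*k)) := by
              rw [show (k+1)*(k+1) = (k+1) + (k+1)*k by ring, pow_add]; ring
      calc (q₀.eval z - (1 - a*z) ^ (k+1)) ^ k * q₀.eval z
          = (q₀.eval z * (a * φ z)) ^ k * q₀.eval z := by rw [hd]
        _ = (q₀.eval z) ^ k * (a * φ z) ^ k * q₀.eval z := by rw [mul_pow]
        _ = (q₀.eval z) ^ k * (a ^ k * (φ z) ^ k) * q₀.eval z := by rw [mul_pow]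
        _ = a ^ k * ((φ z) ^ k * ((q₀.eval z) ^ k * q₀.eval z)) := by ring
        _ = a ^ k * ((φ z) ^ k * (q₀.eval z) ^ (k+1)) := by rw [pow_succ]
        _ = a ^ k * (q₁.eval z * (1 - a*z) ^ ((k+1)*k)) := by rw [hbu]
        _ = a ^ k * q₁.eval z * (1 - a*z) ^ ((k+1)*k) := by ring
    set W : ℂ[X] := 1 - C a * X with hWdef
    have hPeq : (q₀ - W ^ (k+1)) ^ k * q₀ = C (a^k) * q₁ * W ^ ((k+1)*k) := by
      apply poly_eq_of_ball
      intro z hz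
      simp only [hWdef, eval_mul, eval_pow, eval_sub, eval_one, eval_C, eval_X]
      exact key z hz
    have hWfact : W = C (-a) * (X - C a⁻¹) := by
      have h0 : (-a : ℂ) * a⁻¹ = -1 := by
        linear_combination -hainv
      rw [hWdef, mul_sub, ← C_mul, h0]
      simp only [map_neg, map_one, neg_mul]
      ring
    have hq₀ne : q₀ ≠ 0 := by
      intro h0
      have h00 := h1 0 (mem_ball_self one_pos)
      rw [h0] at h00
      simp at h00
    have hq₀deg : q₀.natDegree ≤ k := by omega
    have hXCne : (X - C a⁻¹ : ℂ[X]) ≠ 0 := X_sub_C_ne_zero a⁻¹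
    have hDne : q₀ - W ^ (k+1) ≠ 0 := by
      intro h0
      have hq : q₀ = W ^ (k+1) := sub_eq_zero.mp h0
      have hdeg : q₀.natDegree = k + 1 := by
        rw [hq, hWfact, mul_pow, ← C_pow,
          natDegree_C_mul (pow_ne_zero _ (neg_ne_zero.2 ha)), natDegree_pow,
          natDegree_X_sub_C, mul_one]
      omega
    set m := rootMultiplicity a⁻¹ q₀ with hm
    have hmle : m ≤ q₀.natDegree := by
      have hdl := natDegree_le_of_dvd (pow_rootMultiplicity_dvd q₀ a⁻¹) hq₀ne
      simpa [natDegree_pow, natDegree_X_sub_C] using hdl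
    have hdvdW : ∀ j i : ℕ, i ≤ j → (X - C a⁻¹) ^ i ∣ W ^ j := by
      intro j i hij
      rw [hWfact, mul_pow]
      exact Dvd.dvd.mul_left (pow_dvd_pow _ hij) _
    have hmD : rootMultiplicity a⁻¹ (q₀ - W ^ (k+1)) = m := by
      refine Nat.le_antisymm ?_ ?_
      · by_contra hcon
        push_neg at hcon
        have hdvdD : (X - C a⁻¹) ^ (m+1) ∣ q₀ - W ^ (k+1) :=
          (le_rootMultiplicity_iff hDne).1 hcon
        have hdvdq : (X - C a⁻¹) ^ (m+1) ∣ q₀ := by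
          have hsplit : q₀ = (q₀ - W ^ (k+1)) + W ^ (k+1) := by ring
          rw [hsplit]
          exact dvd_add hdvdD (hdvdW _ _ (by omega))
        have := (le_rootMultiplicity_iff hq₀ne).2 hdvdq
        omega
      · exact (le_rootMultiplicity_iff hDne).2
          (dvd_sub (pow_rootMultiplicity_dvd q₀ a⁻¹) (hdvdW _ _ (by omega)))
    have hP1ne : (q₀ - W ^ (k+1)) ^ k * q₀ ≠ 0 := mul_ne_zero (pow_ne_zero _ hDne) hq₀ne
    have hmul : rootMultiplicity a⁻¹ ((q₀ - W ^ (k+1)) ^ k * q₀) = k * m + m := by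
      rw [rootMultiplicity_mul hP1ne, rootMult_pow hDne, hmD]
    have hge : (k+1)*k ≤ k*m + m := by
      rw [← hmul, hPeq]
      have hP2ne : C (a^k) * q₁ * W ^ ((k+1)*k) ≠ 0 := hPeq ▸ hP1ne
      exact (le_rootMultiplicity_iff hP2ne).2 (Dvd.dvd.mul_left (hdvdW _ _ le_rfl) _)
    have hmk : m = k := by
      have h1' : (k+1)*k ≤ (k+1)*m := by
        calc (k+1)*k ≤ k*m + m := hge
          _ = (k+1)*m := by ring
      have := Nat.le_of_mul_le_mul_left h1' (by omega)
      omega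
    obtain ⟨v, hvfac⟩ : (X - C a⁻¹) ^ k ∣ q₀ := hmk ▸ pow_rootMultiplicity_dvd q₀ a⁻¹
    have hvne : v ≠ 0 := by
      rintro rfl
      simp only [mul_zero] at hvfac
      exact hq₀ne hvfac
    have hvdeg : v.natDegree = 0 := by
      have hcd := congrArg natDegree hvfac
      rw [natDegree_mul (pow_ne_zero _ hXCne) hvne, natDegree_pow,
        natDegree_X_sub_C, mul_one] at hcd
      omega
    obtain ⟨c₁, hc₁⟩ := natDegree_eq_zero.mp hvdeg
    have hc₁ne : c₁ ≠ 0 := by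
      rintro rfl
      rw [map_zero] at hc₁
      exact hvne hc₁.symm
    set d := (-1:ℂ) ^ k * c₁ with hddef
    have hdne : d ≠ 0 := mul_ne_zero (pow_ne_zero _ (by norm_num)) hc₁ne
    refine ⟨a ^ k / d, div_ne_zero (pow_ne_zero _ ha) hdne, ?_⟩
    intro z hz
    have hq0z : q₀.eval z = (z - a⁻¹) ^ k * c₁ := by
      rw [hvfac, ← hc₁]
      simp [eval_mul, eval_pow, eval_sub, eval_X, eval_C]
    have e1 := h1 z hz
    rw [hq0z] at e1
    have hza : a * (z - a⁻¹) = -(1 - a*z) := by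
      linear_combination -hainv
    have e1'' : d * (1 - a * φ z) = a ^ k * (1 - a*z) := by
      apply mul_left_cancel₀ (pow_ne_zero k (hw z hz))
      calc (1 - a*z) ^ k * (d * (1 - a * φ z))
          = (-(1 - a*z)) ^ k * c₁ * (1 - a * φ z) := by
            rw [neg_pow, hddef]; ring
        _ = (a * (z - a⁻¹)) ^ k * c₁ * (1 - a * φ z) := by rw [hza]
        _ = a ^ k * (z - a⁻¹) ^ k * c₁ * (1 - a * φ z) := by rw [mul_pow]
        _ = a ^ k * ((z - a⁻¹) ^ k * c₁ * (1 - a * φ z)) := by ring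
        _ = a ^ k * (1 - a*z) ^ (k+1) := by rw [e1]
        _ = (1 - a*z) ^ k * (a ^ k * (1 - a*z)) := by rw [pow_succ]; ring
    apply mul_left_cancel₀ ha
    apply mul_left_cancel₀ hdne
    have hrhs : d * (a * ((1 - a ^ k / d) / a + a ^ k / d * z))
        = d - a ^ k + a ^ k * (a * z) := by
      field_simp
    rw [hrhs]
    linear_combination -e1''
  · rintro ⟨c, hc, hφc⟩
    intro f hf
    obtain ⟨q, hqd, hqe⟩ := exists_poly_of_mem_Qball hn hf
    set L : ℂ[X] := C ((1-c)/a) + C c * X with hL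
    set q' : ℂ[X] := C ((c ^ (k+1))⁻¹) * q.comp L with hq'
    have hq'd : q'.natDegree < k+1 := by
      have hLd : L.natDegree ≤ 1 := by
        refine le_trans (natDegree_add_le _ _) ?_
        simp only [natDegree_C, max_le_iff]
        refine ⟨Nat.zero_le _, le_trans natDegree_mul_le ?_⟩
        simp [natDegree_C, natDegree_X]
      calc q'.natDegree ≤ (q.comp L).natDegree := natDegree_C_mul_le _ _
        _ ≤ q.natDegree * L.natDegree := natDegree_comp_le
        _ ≤ q.natDegree * 1 := Nat.mul_le_mul_left _ hLd
        _ < k+1 := by omega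
    refine ⟨fun z => q'.eval z / (1 - a*z) ^ (k+1), poly_div_mem_Qball hq'd, ?_⟩
    intro z hz
    show f (φ z) = q'.eval z / (1 - a*z) ^ (k+1)
    have hφz := hφc z hz
    have hLz : L.eval z = φ z := by
      rw [hφz, hL]
      simp [eval_add, eval_mul, eval_C, eval_X]
    have hwφz : 1 - a * φ z = c * (1 - a*z) := by
      have hsub : a * ((1-c)/a + c*z) = (1-c) + c*(a*z) := by
        field_simp
      rw [hφz, hsub]
      ring
    rw [hqe (φ z), hwφz]
    have hq'z : q'.eval z = (c ^ (k+1))⁻¹ * q.eval (φ z) := by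
      rw [hq']
      simp [eval_mul, eval_C, eval_comp, hLz]
    rw [hq'z, mul_pow]
    rw [div_eq_div_iff
      (mul_ne_zero (pow_ne_zero _ hc) (pow_ne_zero _ (hw z hz)))
      (pow_ne_zero _ (hw z hz))]
    field_simp
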